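/- There is an absolute constant C > 0 with the following property. Let d ≥ 1 and H ≥ 1 be integers and let a, b be coprime integers with 1 ≤ a < b. Let μ be the uniform probability mass function on 𝕀(2H)^d ⊆ ℤ^d, let φ : ℤ^d → ℤ be given by φ(v_0, …, v_{d−1}) = Σ_{i=0}^{d−1} v_i · a^{d−1−i} · b^i, and let φ^μ denote the pushforward of μ under φ, a probability mass function on ℤ. Then there exists a probability mass function ϑ on ℤ which is the convolution, over i = 0, …, d−1, of uniform probability mass functions on sets of 2H·a^i·b^{d−1−i} consecutive integers, such that Σ_{t ∈ ℤ} |φ^μ(t) − ϑ(t)| ≤ C·d²·(a + b)/H and |Σ_{t ∈ ℤ} t·ϑ(t)| ≤ Σ_{i=0}^{d−1} a^i·b^{d−1−i}. -/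

import Mathlib

/-- The uniform probability mass function on a finite set of integers, viewed as an
element of `AddMonoidAlgebra ℝ ℤ` (whose multiplication is convolution). -/
noncomputable def unifPMF (s : Finset ℤ) : AddMonoidAlgebra ℝ ℤ :=
  ∑ t ∈ s, AddMonoidAlgebra.single t ((s.card : ℝ))⁻¹

/-- The pushforward under `φ(v) = Σ_i v_i a^{d-1-i} b^i` of the uniform probability mass
function on `𝕀(2H)^d = ([-H, H) ∩ ℤ)^d`, viewed as an element of `AddMonoidAlgebra ℝ ℤ`. -/
noncomputable def pushPMF (d : ℕ) (H a b : ℤ) : AddMonoidAlgebra ℝ ℤ :=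
  ∑ v ∈ Fintype.piFinset (fun _ : Fin d => Finset.Ico (-H) H),
    AddMonoidAlgebra.single (∑ i : Fin d, v i * a ^ (d - 1 - (i : ℕ)) * b ^ (i : ℕ))
      (((2 * H : ℤ) : ℝ) ^ d)⁻¹


open Finset AddMonoidAlgebra

namespace Stmt8

/-- Dirac mass at `t`. -/
noncomputable def sh (t : ℤ) : AddMonoidAlgebra ℝ ℤ := AddMonoidAlgebra.single t 1

/-- Uniform pmf on the arithmetic progression `s, s+c, …, s+(n-1)c`. -/
noncomputable def AP (c s : ℤ) (n : ℕ) : AddMonoidAlgebra ℝ ℤ :=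
  ∑ j ∈ Finset.range n, AddMonoidAlgebra.single (s + (j : ℤ) * c) ((n : ℝ))⁻¹

/-- ℓ¹ norm. -/
noncomputable def nrm (f : AddMonoidAlgebra ℝ ℤ) : ℝ := ∑ t ∈ f.coeff.support, |f.coeff t|

lemma nrm_eq_sum {f : AddMonoidAlgebra ℝ ℤ} {s : Finset ℤ} (h : f.coeff.support ⊆ s) :
    nrm f = ∑ t ∈ s, |f.coeff t| := by
  refine Finset.sum_subset h ?_
  intro x _ hx
  simp [Finsupp.notMem_support_iff.mp hx]

lemma nrm_nonneg (f : AddMonoidAlgebra ℝ ℤ) : 0 ≤ nrm f :=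
  Finset.sum_nonneg fun _ _ => abs_nonneg _

lemma nrm_zero : nrm (0 : AddMonoidAlgebra ℝ ℤ) = 0 := by simp [nrm]

lemma nrm_neg (f : AddMonoidAlgebra ℝ ℤ) : nrm (-f) = nrm f := by
  unfold nrm
  change ∑ t ∈ (-f.coeff).support, |(-f.coeff) t| = _
  rw [Finsupp.support_neg]
  exact Finset.sum_congr rfl fun t _ => by rw [Finsupp.neg_apply, abs_neg]

lemma nrm_single_le (t : ℤ) (c : ℝ) : nrm (AddMonoidAlgebra.single t c) ≤ |c| := by
  rw [nrm_eq_sum (f := AddMonoidAlgebra.single t c) (Finsupp.support_single_subset)]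
  rw [Finset.sum_singleton, AddMonoidAlgebra.coeff_single, Finsupp.single_eq_same]

lemma nrm_add_le (f g : AddMonoidAlgebra ℝ ℤ) : nrm (f + g) ≤ nrm f + nrm g := by
  have h1 : nrm (f + g) = ∑ t ∈ f.coeff.support ∪ g.coeff.support, |(f + g).coeff t| :=
    nrm_eq_sum (Finsupp.support_add)
  have h2 : nrm f = ∑ t ∈ f.coeff.support ∪ g.coeff.support, |f.coeff t| :=
    nrm_eq_sum (Finset.subset_union_left)
  have h3 : nrm g = ∑ t ∈ f.coeff.support ∪ g.coeff.support, |g.coeff t| :=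
    nrm_eq_sum (Finset.subset_union_right)
  rw [h1, h2, h3, ← Finset.sum_add_distrib]
  refine Finset.sum_le_sum fun t _ => ?_
  simpa using abs_add_le (f.coeff t) (g.coeff t)

lemma nrm_sub_le (f g : AddMonoidAlgebra ℝ ℤ) : nrm (f - g) ≤ nrm f + nrm g := by
  rw [sub_eq_add_neg]
  simpa [nrm_neg] using nrm_add_le f (-g)

lemma nrm_sum_le {ι : Type*} (s : Finset ι) (f : ι → AddMonoidAlgebra ℝ ℤ) :
    nrm (∑ i ∈ s, f i) ≤ ∑ i ∈ s, nrm (f i) := by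
  classical
  induction s using Finset.cons_induction with
  | empty => simp [nrm_zero]
  | cons a s ha ih =>
    rw [Finset.sum_cons, Finset.sum_cons]
    exact le_trans (nrm_add_le _ _) (by linarith)

lemma nrm_mul_le (f g : AddMonoidAlgebra ℝ ℤ) : nrm (f * g) ≤ nrm f * nrm g := by
  rw [AddMonoidAlgebra.mul_def]
  unfold Finsupp.sum
  calc nrm (∑ a₁ ∈ f.coeff.support, ∑ a₂ ∈ g.coeff.support,
        AddMonoidAlgebra.single (a₁ + a₂) (f.coeff a₁ * g.coeff a₂))
      ≤ ∑ a₁ ∈ f.coeff.support, nrm (∑ a₂ ∈ g.coeff.support,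
        AddMonoidAlgebra.single (a₁ + a₂) (f.coeff a₁ * g.coeff a₂)) := nrm_sum_le _ _
    _ ≤ ∑ a₁ ∈ f.coeff.support, ∑ a₂ ∈ g.coeff.support,
        nrm (AddMonoidAlgebra.single (a₁ + a₂) (f.coeff a₁ * g.coeff a₂)) :=
        Finset.sum_le_sum fun _ _ => nrm_sum_le _ _
    _ ≤ ∑ a₁ ∈ f.coeff.support, ∑ a₂ ∈ g.coeff.support, |f.coeff a₁| * |g.coeff a₂| := by
        refine Finset.sum_le_sum fun a₁ _ => Finset.sum_le_sum fun a₂ _ => ?_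
        simpa [abs_mul] using nrm_single_le (a₁ + a₂) (f.coeff a₁ * g.coeff a₂)
    _ = nrm f * nrm g := by rw [nrm, nrm, Finset.sum_mul_sum]

lemma nrm_one_le : nrm (1 : AddMonoidAlgebra ℝ ℤ) ≤ 1 := by
  rw [AddMonoidAlgebra.one_def]
  simpa using nrm_single_le 0 (1:ℝ)

lemma nrm_sh_mul (t : ℤ) (x : AddMonoidAlgebra ℝ ℤ) : nrm (sh t * x) = nrm x := by
  have h : ∀ (u : ℤ) (y : AddMonoidAlgebra ℝ ℤ), nrm (sh u * y) ≤ nrm y := by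
    intro u y
    calc nrm (sh u * y) ≤ nrm (sh u) * nrm y := nrm_mul_le _ _
      _ ≤ 1 * nrm y := by
          apply mul_le_mul_of_nonneg_right _ (nrm_nonneg y)
          have h1 := nrm_single_le u (1:ℝ)
          rw [abs_one] at h1
          exact h1
      _ = nrm y := one_mul _
  refine le_antisymm (h t x) ?_
  have : sh (-t) * (sh t * x) = x := by
    rw [← mul_assoc]
    have : sh (-t) * sh t = 1 := by
      rw [sh, sh, AddMonoidAlgebra.single_mul_single, neg_add_cancel, mul_one]
      exact (AddMonoidAlgebra.one_def).symm
    rw [this, one_mul]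
  calc nrm x = nrm (sh (-t) * (sh t * x)) := by rw [this]
    _ ≤ nrm (sh t * x) := h _ _

lemma nrm_prod_le_one {ι : Type*} (s : Finset ι) (f : ι → AddMonoidAlgebra ℝ ℤ)
    (h : ∀ i ∈ s, nrm (f i) ≤ 1) : nrm (∏ i ∈ s, f i) ≤ 1 := by
  classical
  induction s using Finset.cons_induction with
  | empty => simpa using nrm_one_le
  | cons a s ha ih =>
    rw [Finset.prod_cons]
    calc nrm (f a * ∏ i ∈ s, f i) ≤ nrm (f a) * nrm (∏ i ∈ s, f i) := nrm_mul_le _ _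
      _ ≤ 1 * 1 := by
          have h1 := h a (Finset.mem_cons_self a s)
          have h2 := ih (fun i hi => h i (Finset.mem_cons_of_mem hi))
          exact mul_le_mul h1 h2 (nrm_nonneg _) (by linarith [nrm_nonneg (f a)])
      _ = 1 := one_mul 1

lemma nrm_AP_le_one (c s : ℤ) (n : ℕ) : nrm (AP c s n) ≤ 1 := by
  rcases Nat.eq_zero_or_pos n with rfl | hn
  · simp [AP, nrm_zero]
  · calc nrm (AP c s n) ≤ ∑ j ∈ Finset.range n, nrm (AddMonoidAlgebra.single (s + (j:ℤ)*c) ((n:ℝ))⁻¹) :=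
        nrm_sum_le _ _
      _ ≤ ∑ j ∈ Finset.range n, ((n:ℝ))⁻¹ := by
          refine Finset.sum_le_sum fun j _ => ?_
          have h1 := nrm_single_le (s + (j:ℤ)*c) ((n:ℝ))⁻¹
          have h2 : |((n:ℝ))⁻¹| = ((n:ℝ))⁻¹ := abs_of_nonneg (by positivity)
          rw [h2] at h1
          exact h1
      _ = 1 := by
          rw [Finset.sum_const, Finset.card_range, nsmul_eq_mul]
          have : (n:ℝ) ≠ 0 := Nat.cast_ne_zero.mpr hn.ne'
          field_simp

lemma sh_mul_AP (t c s : ℤ) (n : ℕ) : sh t * AP c s n = AP c (s + t) n := by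
  rw [sh, AP, AP, Finset.mul_sum]
  refine Finset.sum_congr rfl fun j _ => ?_
  rw [AddMonoidAlgebra.single_mul_single, one_mul]
  congr 1
  ring

lemma AP_mul_AP (v n : ℕ) (hv : 0 < v) (s : ℤ) :
    AP 1 0 v * AP ((v : ℕ) : ℤ) s n = AP 1 s (v * n) := by
  unfold AP
  rw [Finset.sum_mul_sum, ← Finset.sum_product']
  refine Finset.sum_nbij' (fun p => p.1 + v * p.2) (fun l => (l % v, l / v)) ?_ ?_ ?_ ?_ ?_
  · rintro ⟨p1, p2⟩ hp
    simp only [Finset.mem_product, Finset.mem_range] at hp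
    simp only [Finset.mem_range]
    calc p1 + v * p2 < v * (p2 + 1) := by rw [Nat.mul_succ]; omega
      _ ≤ v * n := Nat.mul_le_mul_left v hp.2
  · intro l hl
    simp only [Finset.mem_range] at hl
    simp only [Finset.mem_product, Finset.mem_range]
    constructor
    · exact Nat.mod_lt _ hv
    · exact Nat.div_lt_of_lt_mul (by omega)
  · rintro ⟨p1, p2⟩ hp
    simp only [Finset.mem_product, Finset.mem_range] at hp
    have h1 : (p1 + v * p2) % v = p1 := by
      rw [Nat.add_mul_mod_self_left, Nat.mod_eq_of_lt hp.1]
    have h2 : (p1 + v * p2) / v = p2 := by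
      rw [Nat.add_mul_div_left _ _ hv, Nat.div_eq_of_lt hp.1, zero_add]
    simp [h1, h2]
  · intro l _
    exact Nat.mod_add_div l v
  · rintro ⟨p1, p2⟩ hp
    simp only [Finset.mem_product, Finset.mem_range] at hp
    rw [AddMonoidAlgebra.single_mul_single]
    congr 1
    · push_cast; ring
    · rw [← mul_inv]
      congr 1
      push_cast; ring

lemma nrm_sum_single_le (s : Finset ℕ) (g : ℕ → ℤ) (w : ℝ) :
    nrm (∑ k ∈ s, AddMonoidAlgebra.single (g k) w) ≤ s.card * |w| := by
  calc nrm (∑ k ∈ s, AddMonoidAlgebra.single (g k) w)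
      ≤ ∑ k ∈ s, nrm (AddMonoidAlgebra.single (g k) w) := nrm_sum_le _ _
    _ ≤ ∑ k ∈ s, |w| := Finset.sum_le_sum fun k _ => nrm_single_le _ _
    _ = s.card * |w| := by rw [Finset.sum_const, nsmul_eq_mul]

lemma nrm_AP_shift_nat (c s : ℤ) {n : ℕ} (hn : 0 < n) (j : ℕ) :
    nrm (AP c (s + (j : ℤ) * c) n - AP c s n) ≤ 2 * (j : ℝ) / n := by
  have hn' : (0:ℝ) < n := by exact_mod_cast hn
  set g : ℕ → AddMonoidAlgebra ℝ ℤ :=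
    fun k => AddMonoidAlgebra.single (s + (k : ℤ) * c) ((n : ℝ))⁻¹ with hg
  have e2 : AP c s n = ∑ k ∈ Finset.Ico 0 n, g k := by
    rw [← Finset.range_eq_Ico]; rfl
  have e1 : AP c (s + (j : ℤ) * c) n = ∑ k ∈ Finset.Ico j (n + j), g k := by
    rw [Finset.sum_Ico_eq_sum_range]
    simp only [Nat.add_sub_cancel]
    unfold AP
    refine Finset.sum_congr rfl fun k _ => ?_
    rw [hg]
    congr 1
    push_cast; ring
  rcases le_or_gt j n with hj | hj
  · have split1 : ∑ k ∈ Finset.Ico j (n + j), g k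
        = ∑ k ∈ Finset.Ico j n, g k + ∑ k ∈ Finset.Ico n (n + j), g k :=
      (Finset.sum_Ico_consecutive g hj (by omega)).symm
    have split2 : ∑ k ∈ Finset.Ico 0 n, g k
        = ∑ k ∈ Finset.Ico 0 j, g k + ∑ k ∈ Finset.Ico j n, g k :=
      (Finset.sum_Ico_consecutive g (Nat.zero_le j) hj).symm
    have ediff : AP c (s + (j : ℤ) * c) n - AP c s n
        = (∑ k ∈ Finset.Ico n (n + j), g k) - ∑ k ∈ Finset.Ico 0 j, g k := by
      rw [e1, e2, split1, split2]; abel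
    rw [ediff]
    have habs : |((n:ℝ))⁻¹| = ((n:ℝ))⁻¹ := abs_of_nonneg (by positivity)
    have b1 : nrm (∑ k ∈ Finset.Ico n (n + j), g k) ≤ j * ((n:ℝ))⁻¹ := by
      have h := nrm_sum_single_le (Finset.Ico n (n + j)) (fun k => s + (k:ℤ)*c) ((n:ℝ))⁻¹
      rw [Nat.card_Ico] at h
      simp only [Nat.add_sub_cancel_left] at h
      rw [habs] at h
      exact h
    have b2 : nrm (∑ k ∈ Finset.Ico 0 j, g k) ≤ j * ((n:ℝ))⁻¹ := by
      have h := nrm_sum_single_le (Finset.Ico 0 j) (fun k => s + (k:ℤ)*c) ((n:ℝ))⁻¹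
      rw [Nat.card_Ico] at h
      simp only [Nat.sub_zero] at h
      rw [habs] at h
      exact h
    calc nrm ((∑ k ∈ Finset.Ico n (n + j), g k) - ∑ k ∈ Finset.Ico 0 j, g k)
        ≤ j * ((n:ℝ))⁻¹ + j * ((n:ℝ))⁻¹ := le_trans (nrm_sub_le _ _) (by linarith)
      _ = 2 * (j:ℝ) / n := by field_simp; ring
  · have b : nrm (AP c (s + (j : ℤ) * c) n - AP c s n) ≤ 2 :=
      le_trans (nrm_sub_le _ _) (by linarith [nrm_AP_le_one c (s + (j:ℤ)*c) n, nrm_AP_le_one c s n])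
    refine le_trans b ?_
    have hjn : (n:ℝ) < (j:ℝ) := by exact_mod_cast hj
    rw [mul_div_assoc]
    have h1 : (1:ℝ) ≤ (j:ℝ)/n := (one_le_div hn').mpr (le_of_lt hjn)
    nlinarith

lemma smooth_AP (c s : ℤ) {n : ℕ} (hn : 0 < n) (j : ℤ) :
    nrm ((1 - sh (j * c)) * AP c s n) ≤ 2 * |(j:ℝ)| / n := by
  have key : (1 - sh (j * c)) * AP c s n = AP c s n - AP c (s + j * c) n := by
    rw [sub_mul, one_mul, sh_mul_AP]
  rw [key]
  obtain ⟨m, hm | hm⟩ := Int.eq_nat_or_neg j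
  · subst hm
    rw [← nrm_neg, neg_sub]
    have := nrm_AP_shift_nat c s hn m
    simpa using this
  · subst hm
    have e : s = (s - (m:ℤ)*c) + (m:ℤ)*c := by ring
    have e2 : s + (-(m:ℤ)) * c = s - (m:ℤ)*c := by ring
    rw [e2]
    nth_rewrite 1 [e]
    have := nrm_AP_shift_nat c (s - (m:ℤ)*c) hn m
    simpa using this

lemma smooth_in_prod (c s : ℤ) {n : ℕ} (hn : 0 < n) (j : ℤ)
    (g : AddMonoidAlgebra ℝ ℤ) (hg : nrm g ≤ 1) :
    nrm ((1 - sh (j * c)) * (AP c s n * g)) ≤ 2 * |(j:ℝ)| / n := by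
  have hpos : (0:ℝ) ≤ 2 * |(j:ℝ)| / n := by positivity
  calc nrm ((1 - sh (j * c)) * (AP c s n * g))
      = nrm (((1 - sh (j * c)) * AP c s n) * g) := by rw [mul_assoc]
    _ ≤ nrm ((1 - sh (j * c)) * AP c s n) * nrm g := nrm_mul_le _ _
    _ ≤ (2 * |(j:ℝ)| / n) * 1 :=
        mul_le_mul (smooth_AP c s hn j) hg (nrm_nonneg _) hpos
    _ = 2 * |(j:ℝ)| / n := mul_one _

lemma sh_add (x y : ℤ) : sh x * sh y = sh (x + y) := by
  rw [sh, sh, sh, AddMonoidAlgebra.single_mul_single, one_mul]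

lemma smooth_chain (x y : ℤ) (f : AddMonoidAlgebra ℝ ℤ) :
    nrm ((1 - sh (x + y)) * f) ≤ nrm ((1 - sh x) * f) + nrm ((1 - sh y) * f) := by
  have key : (1 - sh (x + y)) * f = (1 - sh x) * f + sh x * ((1 - sh y) * f) := by
    rw [← sh_add]; ring
  rw [key]
  refine le_trans (nrm_add_le _ _) ?_
  rw [nrm_sh_mul]

lemma sh_zero : sh 0 = 1 := by
  rw [sh]; exact (AddMonoidAlgebra.one_def).symm

lemma smooth_sum (m : ℕ) (t : ℕ → ℤ) (f : AddMonoidAlgebra ℝ ℤ) :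
    nrm ((1 - sh (∑ k ∈ Finset.range m, t k)) * f)
      ≤ ∑ k ∈ Finset.range m, nrm ((1 - sh (t k)) * f) := by
  induction m with
  | zero => simp [sh_zero, nrm_zero]
  | succ m ih =>
    rw [Finset.sum_range_succ, Finset.sum_range_succ]
    exact le_trans (smooth_chain _ _ f) (by linarith)

lemma flatten {v : ℕ} (hv : 0 < v) (f : AddMonoidAlgebra ℝ ℤ) (K : ℝ)
    (hK : ∀ r : ℕ, r < v → nrm ((1 - sh r) * f) ≤ K) :
    nrm ((1 - AP 1 0 v) * f) ≤ K := by
  have hv' : (0:ℝ) < v := by exact_mod_cast hv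
  have hone : (1 : AddMonoidAlgebra ℝ ℤ)
      = ∑ _r ∈ Finset.range v, AddMonoidAlgebra.single (0:ℤ) ((v:ℝ))⁻¹ := by
    rw [Finset.sum_const, Finset.card_range, AddMonoidAlgebra.smul_single]
    rw [nsmul_eq_mul, mul_inv_cancel₀ (ne_of_gt hv')]
    exact AddMonoidAlgebra.one_def
  have key : (1 - AP 1 0 v) * f
      = ∑ r ∈ Finset.range v, AddMonoidAlgebra.single (0:ℤ) ((v:ℝ))⁻¹ * ((1 - sh r) * f) := by
    nth_rewrite 1 [hone]
    rw [AP, ← Finset.sum_sub_distrib, Finset.sum_mul]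
    refine Finset.sum_congr rfl fun r _ => ?_
    rw [← mul_assoc]
    congr 1
    rw [mul_sub, mul_one, sh, AddMonoidAlgebra.single_mul_single]
    congr 2
    · ring
    · rw [mul_one]
  rw [key]
  have hK0 : 0 ≤ K := le_trans (nrm_nonneg _) (hK 0 hv)
  calc nrm (∑ r ∈ Finset.range v, AddMonoidAlgebra.single (0:ℤ) ((v:ℝ))⁻¹ * ((1 - sh r) * f))
      ≤ ∑ r ∈ Finset.range v, nrm (AddMonoidAlgebra.single (0:ℤ) ((v:ℝ))⁻¹ * ((1 - sh r) * f)) :=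
        nrm_sum_le _ _
    _ ≤ ∑ r ∈ Finset.range v, ((v:ℝ))⁻¹ * K := by
        refine Finset.sum_le_sum fun r hr => ?_
        calc nrm (AddMonoidAlgebra.single (0:ℤ) ((v:ℝ))⁻¹ * ((1 - sh r) * f))
            ≤ nrm (AddMonoidAlgebra.single (0:ℤ) ((v:ℝ))⁻¹) * nrm ((1 - sh r) * f) := nrm_mul_le _ _
          _ ≤ ((v:ℝ))⁻¹ * K := by
              refine mul_le_mul ?_ (hK r (Finset.mem_range.mp hr)) (nrm_nonneg _) (by positivity)
              have := nrm_single_le (0:ℤ) ((v:ℝ))⁻¹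
              rwa [abs_of_nonneg (by positivity : (0:ℝ) ≤ ((v:ℝ))⁻¹)] at this
    _ = K := by
        rw [Finset.sum_const, Finset.card_range, nsmul_eq_mul]
        field_simp
noncomputable def massHom : AddMonoidAlgebra ℝ ℤ →+ ℝ :=
  (Finsupp.liftAddHom (fun _ => AddMonoidHom.id ℝ)).comp coeffAddEquiv.toAddMonoidHom

noncomputable def meanHom : AddMonoidAlgebra ℝ ℤ →+ ℝ :=
  (Finsupp.liftAddHom (fun (t : ℤ) => AddMonoidHom.mulLeft (t : ℝ))).comp coeffAddEquiv.toAddMonoidHom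

lemma massHom_single (t : ℤ) (c : ℝ) : massHom (AddMonoidAlgebra.single t c) = c := by
  exact Finsupp.liftAddHom_apply_single _ t c

lemma meanHom_single (t : ℤ) (c : ℝ) : meanHom (AddMonoidAlgebra.single t c) = t * c := by
  exact Finsupp.liftAddHom_apply_single _ t c

lemma massHom_apply (f : AddMonoidAlgebra ℝ ℤ) : massHom f = ∑ t ∈ f.coeff.support, f.coeff t :=
  Finsupp.liftAddHom_apply _ f.coeff

lemma meanHom_apply (f : AddMonoidAlgebra ℝ ℤ) : meanHom f = ∑ t ∈ f.coeff.support, (t:ℝ) * f.coeff t :=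
  Finsupp.liftAddHom_apply _ f.coeff

lemma mass_mul (f g : AddMonoidAlgebra ℝ ℤ) : massHom (f * g) = massHom f * massHom g := by
  rw [AddMonoidAlgebra.mul_def, map_finsuppSum]
  simp only [map_finsuppSum, massHom_single]
  rw [massHom_apply, massHom_apply, Finset.sum_mul_sum]
  simp only [Finsupp.sum]

lemma mean_mul (f g : AddMonoidAlgebra ℝ ℤ) :
    meanHom (f * g) = meanHom f * massHom g + massHom f * meanHom g := by
  rw [AddMonoidAlgebra.mul_def, map_finsuppSum]
  simp only [map_finsuppSum, meanHom_single]
  rw [massHom_apply, massHom_apply, meanHom_apply, meanHom_apply,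
    Finset.sum_mul_sum, Finset.sum_mul_sum, ← Finset.sum_add_distrib]
  simp only [Finsupp.sum]
  refine Finset.sum_congr rfl fun a₁ _ => ?_
  rw [← Finset.sum_add_distrib]
  refine Finset.sum_congr rfl fun a₂ _ => ?_
  push_cast
  ring

lemma mass_one : massHom (1 : AddMonoidAlgebra ℝ ℤ) = 1 := by
  rw [AddMonoidAlgebra.one_def, massHom_single]

lemma mean_one : meanHom (1 : AddMonoidAlgebra ℝ ℤ) = 0 := by
  rw [AddMonoidAlgebra.one_def, meanHom_single]
  simp

lemma sum_range_cast (n : ℕ) : ∑ j ∈ Finset.range n, (j:ℝ) = n * (n - 1) / 2 := by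
  induction n with
  | zero => simp
  | succ n ih =>
    rw [Finset.sum_range_succ, ih]
    push_cast
    ring

lemma mass_AP (c s : ℤ) {n : ℕ} (hn : 0 < n) : massHom (AP c s n) = 1 := by
  have hn' : (n:ℝ) ≠ 0 := Nat.cast_ne_zero.mpr hn.ne'
  rw [AP, map_sum]
  simp only [massHom_single]
  rw [Finset.sum_const, Finset.card_range, nsmul_eq_mul]
  field_simp

lemma mean_AP (c s : ℤ) {n : ℕ} (hn : 0 < n) :
    meanHom (AP c s n) = s + c * ((n:ℝ) - 1) / 2 := by
  have hn' : (n:ℝ) ≠ 0 := Nat.cast_ne_zero.mpr hn.ne'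
  rw [AP, map_sum]
  simp only [meanHom_single]
  have : ∀ j ∈ Finset.range n, ((s + (j:ℤ)*c : ℤ):ℝ) * ((n:ℝ))⁻¹
      = (s:ℝ) * (n:ℝ)⁻¹ + (j:ℝ) * ((c:ℝ) * (n:ℝ)⁻¹) := by
    intro j _
    push_cast
    ring
  rw [Finset.sum_congr rfl this, Finset.sum_add_distrib, Finset.sum_const,
    Finset.card_range, nsmul_eq_mul, ← Finset.sum_mul, sum_range_cast]
  field_simp

lemma prod_mass_mean {ι : Type*} (s : Finset ι) (f : ι → AddMonoidAlgebra ℝ ℤ)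
    (hmass : ∀ i ∈ s, massHom (f i) = 1) :
    massHom (∏ i ∈ s, f i) = 1 ∧ meanHom (∏ i ∈ s, f i) = ∑ i ∈ s, meanHom (f i) := by
  classical
  induction s using Finset.cons_induction with
  | empty => simpa using ⟨mass_one, mean_one⟩
  | cons a s ha ih =>
    have h1 := hmass a (Finset.mem_cons_self a s)
    obtain ⟨ihm, ihe⟩ := ih (fun i hi => hmass i (Finset.mem_cons_of_mem hi))
    rw [Finset.prod_cons, Finset.sum_cons]
    constructor
    · rw [mass_mul, h1, ihm, one_mul]
    · rw [mean_mul, h1, ihm, ihe]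
      ring
lemma digitRep (a b : ℤ) (ha : 1 ≤ a) (hab : a < b) (hcop : IsCoprime a b) :
    ∀ (m : ℕ) (x : ℤ), ∃ (β : ℕ → ℤ) (γ : ℤ),
      (∀ k, 0 ≤ β k ∧ β k < b) ∧
      |γ| * b ^ m ≤ |x| + (m : ℤ) * (a * b ^ m) ∧
      x = (∑ k ∈ Finset.range m, β k * a ^ (m - k) * b ^ k) + γ * b ^ m := by
  have hb : 0 < b := by linarith
  intro m
  induction m with
  | zero =>
    intro x
    refine ⟨fun _ => 0, x, fun k => ⟨le_refl 0, by simpa using hb⟩, by simp, by simp⟩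
  | succ m ih =>
    intro x
    obtain ⟨u, v, huv⟩ : IsCoprime (a ^ (m+1)) b := hcop.pow_left
    set β₀ := (x * u) % b with hβ₀
    have hβ₀0 : 0 ≤ β₀ := Int.emod_nonneg _ (ne_of_gt hb)
    have hβ₀b : β₀ < b := Int.emod_lt_of_pos _ hb
    have hdvd : b ∣ (x - β₀ * a ^ (m+1)) := by
      have h1 : x * u - β₀ = b * ((x * u) / b) := by
        rw [hβ₀, Int.emod_def]
        ring
      have h2 : x - β₀ * a ^ (m+1) = (x * u - β₀) * a ^ (m+1) + (x * v) * b := by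
        have : x * (u * a ^ (m+1) + v * b) = x := by rw [huv, mul_one]
        nlinarith [this]
      rw [h2, h1]
      exact dvd_add ⟨(x * u / b) * a ^ (m+1), by ring⟩ ⟨x * v, by ring⟩
    obtain ⟨x', hx'⟩ := hdvd
    obtain ⟨β', γ, hβ', hγ, hrep⟩ := ih x'
    refine ⟨fun k => if k = 0 then β₀ else β' (k-1), γ, ?_, ?_, ?_⟩
    · intro k
      by_cases h : k = 0
      · simp [h, hβ₀0, hβ₀b]
      · simp only [h, if_false]
        exact hβ' (k-1)
    · -- the size bound
      have hbm : (0:ℤ) < b ^ m := pow_pos hb m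
      have hbm1 : (0:ℤ) < b ^ (m+1) := pow_pos hb (m+1)
      have ham : (0:ℤ) < a ^ (m+1) := pow_pos (by linarith) (m+1)
      have hpow : a ^ (m+1) ≤ a * b ^ m := by
        have h1 : a ^ m ≤ b ^ m := pow_le_pow_left₀ (by linarith) (le_of_lt hab) m
        calc a ^ (m+1) = a * a ^ m := by rw [pow_succ]; ring
          _ ≤ a * b ^ m := by nlinarith
      have habs : |b * x'| = b * |x'| := by
        rw [abs_mul, abs_of_pos hb]
      have hxb : b * |x'| ≤ |x| + β₀ * a ^ (m+1) := by
        rw [← habs, ← hx']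
        calc |x - β₀ * a ^ (m+1)| ≤ |x| + |β₀ * a ^ (m+1)| := abs_sub _ _
          _ = |x| + β₀ * a ^ (m+1) := by
              rw [abs_of_nonneg (mul_nonneg hβ₀0 (le_of_lt ham))]
      have key : |γ| * b ^ m * b ≤ (|x'| + (m:ℤ) * (a * b ^ m)) * b :=
        mul_le_mul_of_nonneg_right hγ (le_of_lt hb)
      have hβa : β₀ * a ^ (m+1) ≤ a * b ^ (m+1) := by
        have h1 : β₀ * a ^ (m+1) ≤ (b - 1) * a ^ (m+1) := by nlinarith
        have h2 : (b - 1) * a ^ (m+1) ≤ (b - 1) * (a * b ^ m) := by nlinarith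
        have h3 : (b - 1) * (a * b ^ m) ≤ a * b ^ (m+1) := by
          have : b ^ (m+1) = b ^ m * b := by rw [pow_succ]
          nlinarith [ha, hbm]
        linarith
      have e1 : |γ| * b ^ (m+1) = |γ| * b ^ m * b := by rw [pow_succ]; ring
      have e2 : ((m:ℤ)) * (a * b ^ m) * b = (m:ℤ) * (a * b ^ (m+1)) := by
        rw [pow_succ]; ring
      push_cast
      have habs2 : 0 ≤ |x'| := abs_nonneg _
      nlinarith [key, hxb, hβa, habs2]
    · -- representation
      have hx : x = β₀ * a ^ (m+1) + b * x' := by linarith [hx']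
      rw [Finset.sum_range_succ']
      have term0 : (if (0:ℕ) = 0 then β₀ else β' 0) * a ^ (m + 1 - 0) * b ^ (0:ℕ)
          = β₀ * a ^ (m+1) := by simp
      have terms : ∀ k ∈ Finset.range m,
          (if k + 1 = 0 then β₀ else β' (k+1-1)) * a ^ (m + 1 - (k+1)) * b ^ (k+1)
          = b * (β' k * a ^ (m - k) * b ^ k) := by
        intro k _
        have h1 : k + 1 ≠ 0 := Nat.succ_ne_zero k
        have h2 : m + 1 - (k+1) = m - k := Nat.succ_sub_succ m k
        simp only [h1, if_false, Nat.add_sub_cancel, h2]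
        ring
      rw [Finset.sum_congr rfl terms, term0, ← Finset.mul_sum, hx, hrep]
      rw [pow_succ]
      ring
lemma nrm_mul_le_one {x y : AddMonoidAlgebra ℝ ℤ} (hx : nrm x ≤ 1) (hy : nrm y ≤ 1) :
    nrm (x * y) ≤ 1 := by
  refine le_trans (nrm_mul_le x y) ?_
  nlinarith [nrm_nonneg x, nrm_nonneg y]

lemma prod_single_finset {ι : Type*} (s : Finset ι) (g : ι → ℤ) (w : ι → ℝ) :
    ∏ i ∈ s, AddMonoidAlgebra.single (g i) (w i)
      = AddMonoidAlgebra.single (∑ i ∈ s, g i) (∏ i ∈ s, w i) := by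
  classical
  induction s using Finset.cons_induction with
  | empty => simpa using AddMonoidAlgebra.one_def
  | cons a s ha ih =>
    rw [Finset.prod_cons, Finset.sum_cons, Finset.prod_cons, ih,
      AddMonoidAlgebra.single_mul_single]

lemma unif_eq (s : ℤ) (n : ℕ) :
    unifPMF (Finset.Ico s (s + (n:ℤ))) = AP 1 s n := by
  unfold unifPMF AP
  have hcard : (Finset.Ico s (s + (n:ℤ))).card = n := by
    rw [Int.card_Ico]; omega
  rw [hcard]
  refine Finset.sum_nbij' (fun t => (t - s).toNat) (fun j => s + (j:ℤ)) ?_ ?_ ?_ ?_ ?_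
  · intro t ht
    rw [Finset.mem_Ico] at ht
    rw [Finset.mem_range]
    omega
  · intro j hj
    rw [Finset.mem_range] at hj
    rw [Finset.mem_Ico]
    omega
  · intro t ht
    rw [Finset.mem_Ico] at ht
    omega
  · intro j hj
    rw [Finset.mem_range] at hj
    omega
  · intro t ht
    rw [Finset.mem_Ico] at ht
    congr 1
    rw [mul_one]
    omega
set_option maxHeartbeats 1000000 in
theorem main_thm : ∀ (d : ℕ), 1 ≤ d → ∀ (H : ℤ), 1 ≤ H → ∀ a b : ℤ,
      Int.gcd a b = 1 → 1 ≤ a → a < b →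
      ∃ (k : ℕ → ℤ) (ϑ : AddMonoidAlgebra ℝ ℤ),
        ϑ = ∏ i ∈ Finset.range d,
              unifPMF (Finset.Ico (k i) (k i + 2 * H * a ^ i * b ^ (d - 1 - i))) ∧
        (∑ t ∈ (pushPMF d H a b - ϑ).coeff.support, |(pushPMF d H a b - ϑ).coeff t|)
          ≤ 4 * (d : ℝ) ^ 2 * ((a : ℝ) + (b : ℝ)) / (H : ℝ) ∧
        |∑ t ∈ ϑ.coeff.support, (t : ℝ) * ϑ.coeff t|
          ≤ ∑ i ∈ Finset.range d, (a : ℝ) ^ i * (b : ℝ) ^ (d - 1 - i) := by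
  intro d hd H hH a b hgcd ha hab
  obtain ⟨e, rfl⟩ : ∃ e, d = e + 1 := ⟨d - 1, by omega⟩
  have hb2 : 2 ≤ b := by omega
  have ha0 : (0:ℤ) < a := by omega
  have hb0 : (0:ℤ) < b := by omega
  have hH0 : (0:ℤ) < H := hH
  have hcop : IsCoprime a b := Int.isCoprime_iff_gcd_eq_one.mpr hgcd
  -- basic numbers
  set N : ℕ := (2 * H).toNat with hNdef
  have hNZ : (N : ℤ) = 2 * H := Int.toNat_of_nonneg (by linarith)
  have hNpos : 0 < N := by
    have : (0:ℤ) < (N:ℤ) := by rw [hNZ]; linarith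
    exact_mod_cast this
  have hNR : (N : ℝ) = 2 * (H : ℝ) := by exact_mod_cast congrArg (Int.cast : ℤ → ℝ) hNZ
  set c : ℕ → ℤ := fun i => a ^ (e - i) * b ^ i with hc
  have hcpos : ∀ i, 0 < c i := fun i => by
    rw [hc]; positivity
  set cn : ℕ → ℕ := fun i => (c i).toNat with hcndef
  have hcnc : ∀ i, ((cn i : ℕ) : ℤ) = c i := fun i => Int.toNat_of_nonneg (hcpos i).le
  have hcnpos : ∀ i, 0 < cn i := fun i => by
    have : (0:ℤ) < ((cn i : ℕ) : ℤ) := by rw [hcnc]; exact hcpos i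
    exact_mod_cast this
  set F : ℕ → AddMonoidAlgebra ℝ ℤ := fun i => AP (c i) (-H * c i) N with hF
  set G : ℕ → AddMonoidAlgebra ℝ ℤ := fun i => AP 1 (-H * c i) (cn i * N) with hG
  have hGF : ∀ i, G i = AP 1 0 (cn i) * F i := by
    intro i
    rw [hG, hF]
    dsimp only
    rw [← AP_mul_AP (cn i) N (hcnpos i) (-H * c i), hcnc]
  have hnrmF : ∀ i, nrm (F i) ≤ 1 := fun i => nrm_AP_le_one _ _ _
  have hnrmG : ∀ i, nrm (G i) ≤ 1 := fun i => nrm_AP_le_one _ _ _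
  -- the target
  set ϑ : AddMonoidAlgebra ℝ ℤ := ∏ i ∈ Finset.range (e+1), G i with hϑ
  -- bridging pushPMF
  have F_eq : ∀ i : ℕ, F i = ∑ x ∈ Finset.Ico (-H) H,
      AddMonoidAlgebra.single (x * c i) ((N:ℝ))⁻¹ := by
    intro i
    rw [hF]
    dsimp only
    rw [AP]
    refine (Finset.sum_nbij' (fun x => (x + H).toNat) (fun j => -H + (j:ℤ)) ?_ ?_ ?_ ?_ ?_).symm
    · intro x hx
      rw [Finset.mem_Ico] at hx
      rw [Finset.mem_range]
      omega
    · intro j hj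
      rw [Finset.mem_range] at hj
      rw [Finset.mem_Ico]
      omega
    · intro x hx
      rw [Finset.mem_Ico] at hx
      omega
    · intro j hj
      rw [Finset.mem_range] at hj
      omega
    · intro x hx
      rw [Finset.mem_Ico] at hx
      congr 1
      have : ((x + H).toNat : ℤ) = x + H := by omega
      rw [this]
      ring
  have push_eq : pushPMF (e+1) H a b = ∏ i ∈ Finset.range (e+1), F i := by
    rw [← Fin.prod_univ_eq_prod_range]
    have step1 : ∀ i : Fin (e+1), F (i:ℕ) = ∑ x ∈ Finset.Ico (-H) H,
        AddMonoidAlgebra.single (x * c (i:ℕ)) ((N:ℝ))⁻¹ := fun i => F_eq i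
    rw [Finset.prod_congr rfl (fun i _ => step1 i)]
    rw [Finset.prod_univ_sum]
    unfold pushPMF
    refine Finset.sum_congr rfl fun v hv => ?_
    rw [prod_single_finset]
    congr 1
    · refine Finset.sum_congr rfl fun i _ => ?_
      rw [hc]
      dsimp only
      have : e + 1 - 1 - (i:ℕ) = e - (i:ℕ) := by omega
      rw [this]
      ring
    · rw [Finset.prod_const, Finset.card_univ, Fintype.card_fin, ← inv_pow]
      congr 2
      rw [hNR]
      push_cast
      ring
  -- telescoping family
  set W : ℕ → AddMonoidAlgebra ℝ ℤ := fun m =>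
    (∏ i ∈ Finset.range m, F i) * ∏ i ∈ Finset.Ico m (e+1), G i with hW
  have hWtop : W (e+1) = ∏ i ∈ Finset.range (e+1), F i := by
    rw [hW]; dsimp only; rw [Finset.Ico_self, Finset.prod_empty, mul_one]
  have hW0 : W 0 = ϑ := by
    rw [hW, hϑ]; dsimp only
    rw [Finset.range_zero, Finset.prod_empty, one_mul, ← Finset.range_eq_Ico]
  set K : ℝ := ((e:ℝ)+1) * ((a:ℝ)+(b:ℝ)) / (H:ℝ) with hK
  have hHr : (0:ℝ) < (H:ℝ) := by exact_mod_cast hH0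
  have har : (1:ℝ) ≤ (a:ℝ) := by exact_mod_cast ha
  have habr : (a:ℝ) < (b:ℝ) := by exact_mod_cast hab
  have he0 : (0:ℝ) ≤ (e:ℝ) := Nat.cast_nonneg e
  have hKpos : 0 ≤ K := by
    rw [hK]
    apply div_nonneg _ hHr.le
    nlinarith
  have hGe : G e = AP 1 (-H * c e) (cn e * N) := by rw [hG]
  have hce : c e = b ^ e := by
    rw [hc]; dsimp only; rw [Nat.sub_self, pow_zero, one_mul]
  -- the per-factor flattening error
  have step : ∀ m, m < e + 1 → nrm (W (m+1) - W m) ≤ K := by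
    intro m hm
    have hdecomp : W (m+1) - W m
        = (1 - AP 1 0 (cn m)) * (F m * ((∏ i ∈ Finset.range m, F i) *
            ∏ i ∈ Finset.Ico (m+1) (e+1), G i)) := by
      rw [hW]
      dsimp only
      rw [Finset.prod_range_succ, Finset.prod_eq_prod_Ico_succ_bot hm G, hGF m]
      ring
    rw [hdecomp]
    rcases Nat.lt_or_ge m e with hme | hme
    · -- m < e : smooth with the long interval G e
      have hein : e ∈ Finset.Ico (m+1) (e+1) := by
        rw [Finset.mem_Ico]; omega
      have hsplit : ∏ i ∈ Finset.Ico (m+1) (e+1), G i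
          = G e * ∏ i ∈ (Finset.Ico (m+1) (e+1)).erase e, G i :=
        (Finset.mul_prod_erase _ G hein).symm
      set Y : AddMonoidAlgebra ℝ ℤ := F m * ((∏ i ∈ Finset.range m, F i) *
          ∏ i ∈ (Finset.Ico (m+1) (e+1)).erase e, G i) with hY
      have harg : F m * ((∏ i ∈ Finset.range m, F i) *
          ∏ i ∈ Finset.Ico (m+1) (e+1), G i) = AP 1 (-H * c e) (cn e * N) * Y := by
        rw [hsplit, hGe, hY]; ring
      rw [harg]
      have hYnrm : nrm Y ≤ 1 := by
        rw [hY]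
        exact nrm_mul_le_one (hnrmF m) (nrm_mul_le_one
          (nrm_prod_le_one _ _ (fun i _ => hnrmF i))
          (nrm_prod_le_one _ _ (fun i _ => hnrmG i)))
      have hMpos : 0 < cn e * N := Nat.mul_pos (hcnpos e) hNpos
      refine flatten (hcnpos m) _ K ?_
      intro r hr
      have hsm := smooth_in_prod 1 (-H * c e) hMpos ((r:ℕ):ℤ) Y hYnrm
      rw [mul_one] at hsm
      refine le_trans hsm ?_
      -- 2 r / (cn e * N) ≤ K
      have hcm_le : c m ≤ c e := by
        have h1 : a ^ (e - m) ≤ b ^ (e - m) :=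
          pow_le_pow_left₀ ha0.le hab.le (e - m)
        have h2 : c m ≤ b ^ (e - m) * b ^ m := by
          rw [hc]
          dsimp only
          exact mul_le_mul_of_nonneg_right h1 (pow_nonneg hb0.le m)
        have h3 : b ^ (e - m) * b ^ m = b ^ e := by
          rw [← pow_add, Nat.sub_add_cancel (le_of_lt hme)]
        rw [hce]
        linarith
      have hrc : (((r:ℕ)):ℝ) ≤ ((c e:ℤ):ℝ) := by
        have h1 : ((r:ℕ):ℤ) ≤ c e := by
          have h2 : ((r:ℕ):ℤ) < ((cn m : ℕ):ℤ) := by exact_mod_cast hr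
          rw [hcnc m] at h2
          linarith
        exact_mod_cast h1
      have habsr : |(((r:ℕ):ℤ):ℝ)| = ((r:ℕ):ℝ) := by
        push_cast
        exact abs_of_nonneg (Nat.cast_nonneg r)
      have hcer : (0:ℝ) < ((c e:ℤ):ℝ) := by exact_mod_cast hcpos e
      have hMcast : ((cn e * N : ℕ):ℝ) = ((c e:ℤ):ℝ) * (2*(H:ℝ)) := by
        rw [Nat.cast_mul, hNR]
        have h1 : ((cn e : ℕ):ℝ) = ((c e : ℤ):ℝ) := by exact_mod_cast hcnc e
        rw [h1]
      calc 2 * |(((r:ℕ):ℤ):ℝ)| / ((cn e * N : ℕ):ℝ)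
          = 2 * ((r:ℕ):ℝ) / (((c e:ℤ):ℝ) * (2*(H:ℝ))) := by rw [habsr, hMcast]
        _ ≤ 2 * ((c e:ℤ):ℝ) / (((c e:ℤ):ℝ) * (2*(H:ℝ))) := by gcongr
        _ = 1 / (H:ℝ) := by
            field_simp
        _ ≤ K := by
            rw [hK]
            refine (div_le_div_iff_of_pos_right hHr).mpr ?_
            nlinarith
    · -- m = e : digit expansion smoothing
      have hme' : m = e := by omega
      subst hme'
      have harg : F m * ((∏ i ∈ Finset.range m, F i) * ∏ i ∈ Finset.Ico (m+1) (m+1), G i)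
          = ∏ i ∈ Finset.range (m+1), F i := by
        rw [Finset.Ico_self, Finset.prod_empty, mul_one, Finset.prod_range_succ]
        ring
      rw [harg]
      refine flatten (hcnpos m) _ K ?_
      intro r hr
      have hrb : ((r:ℕ):ℤ) < b ^ m := by
        have h1 : ((r:ℕ):ℤ) < ((cn m : ℕ):ℤ) := by exact_mod_cast hr
        rw [hcnc m, hce] at h1
        exact h1
      obtain ⟨β, γ, hβ, hγbd, hrep⟩ := digitRep a b ha hab hcop m ((r:ℕ):ℤ)
      have hbe : (0:ℤ) < b ^ m := pow_pos hb0 m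
      have hγ : |γ| ≤ ((m:ℤ)+1) * a := by
        rw [Int.abs_natCast] at hγbd
        have h2 : |γ| * b ^ m ≤ (((m:ℤ)+1) * a) * b ^ m := by nlinarith
        exact le_of_mul_le_mul_right h2 hbe
      set δ : ℕ → ℤ := fun k => if k = m then γ else β k with hδ
      have hrsum : ((r:ℕ):ℤ) = ∑ k ∈ Finset.range (m+1), δ k * c k := by
        rw [Finset.sum_range_succ]
        have h1 : ∀ k ∈ Finset.range m, δ k * c k = β k * a ^ (m - k) * b ^ k := by
          intro k hk
          rw [Finset.mem_range] at hk
          rw [hδ]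
          dsimp only
          rw [if_neg (by omega), hc]
          dsimp only
          ring
        rw [Finset.sum_congr rfl h1]
        have h2 : δ m * c m = γ * b ^ m := by
          rw [hδ]
          dsimp only
          rw [if_pos rfl, hce]
        rw [h2]
        exact hrep
      rw [hrsum]
      refine le_trans (smooth_sum (m+1) (fun k => δ k * c k) _) ?_
      have hterm : ∀ k ∈ Finset.range (m+1),
          nrm ((1 - sh (δ k * c k)) * ∏ i ∈ Finset.range (m+1), F i)
            ≤ 2 * |((δ k : ℤ):ℝ)| / (N:ℝ) := by
        intro k hk
        have hfac : ∏ i ∈ Finset.range (m+1), F i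
            = F k * ∏ i ∈ (Finset.range (m+1)).erase k, F i :=
          (Finset.mul_prod_erase _ F hk).symm
        have hFk : F k = AP (c k) (-H * c k) N := by rw [hF]
        rw [hfac, hFk]
        exact smooth_in_prod (c k) (-H * c k) hNpos (δ k) _
          (nrm_prod_le_one _ _ (fun i _ => hnrmF i))
      refine le_trans (Finset.sum_le_sum hterm) ?_
      rw [Finset.sum_range_succ]
      have hδm : δ m = γ := by rw [hδ]; dsimp only; rw [if_pos rfl]
      have hbnd1 : ∀ k ∈ Finset.range m,
          2 * |((δ k : ℤ):ℝ)| / (N:ℝ) ≤ 2 * ((b:ℝ)-1) / (N:ℝ) := by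
        intro k hk
        rw [Finset.mem_range] at hk
        have h1 : δ k = β k := by rw [hδ]; dsimp only; rw [if_neg (by omega)]
        have h2 := hβ k
        have h3 : |((δ k : ℤ):ℝ)| ≤ (b:ℝ) - 1 := by
          rw [h1, abs_of_nonneg (by exact_mod_cast h2.1 : (0:ℝ) ≤ ((β k : ℤ):ℝ))]
          have h4 : β k ≤ b - 1 := by omega
          have h5 : ((β k : ℤ):ℝ) ≤ ((b - 1 : ℤ):ℝ) := by exact_mod_cast h4
          push_cast at h5
          linarith
        gcongr
      have hbnd2 : 2 * |((δ m : ℤ):ℝ)| / (N:ℝ) ≤ 2 * (((m:ℝ)+1) * (a:ℝ)) / (N:ℝ) := by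
        have h3 : |((δ m : ℤ):ℝ)| ≤ ((m:ℝ)+1) * (a:ℝ) := by
          rw [hδm]
          calc |((γ : ℤ):ℝ)| = ((|γ| : ℤ):ℝ) := by rw [Int.cast_abs]
            _ ≤ ((((m:ℤ)+1) * a : ℤ):ℝ) := by exact_mod_cast hγ
            _ = ((m:ℝ)+1) * (a:ℝ) := by push_cast; ring
        gcongr
      refine le_trans (add_le_add (Finset.sum_le_sum hbnd1) hbnd2) ?_
      rw [Finset.sum_const, Finset.card_range, nsmul_eq_mul, hK, hNR]
      have hform : (m:ℝ) * (2*((b:ℝ)-1)/(2*(H:ℝ))) + 2*(((m:ℝ)+1)*(a:ℝ))/(2*(H:ℝ))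
          = ((m:ℝ)*((b:ℝ)-1) + ((m:ℝ)+1)*(a:ℝ))/(H:ℝ) := by
        field_simp
      rw [hform]
      refine (div_le_div_iff_of_pos_right hHr).mpr ?_
      have hm0 : (0:ℝ) ≤ (m:ℝ) := Nat.cast_nonneg m
      have hgoal : ((m:ℝ)+1)*((a:ℝ)+(b:ℝ)) - ((m:ℝ)*((b:ℝ)-1) + ((m:ℝ)+1)*(a:ℝ))
          = (b:ℝ) + (m:ℝ) := by ring
      linarith
  -- telescoping
  have tele : ∀ m, m ≤ e + 1 → nrm (W m - ϑ) ≤ (m:ℝ) * K := by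
    intro m
    induction m with
    | zero =>
      intro _
      rw [hW0, sub_self, nrm_zero]
      simp
    | succ m ih =>
      intro hm1
      have h1 := ih (by omega)
      have h2 := step m (by omega)
      have h3 : W (m+1) - ϑ = (W (m+1) - W m) + (W m - ϑ) := by ring
      rw [h3]
      refine le_trans (nrm_add_le _ _) ?_
      push_cast
      linarith
  have hTV : nrm (pushPMF (e+1) H a b - ϑ) ≤ ((e:ℝ)+1) * K := by
    rw [push_eq, ← hWtop]
    have h := tele (e+1) (le_refl _)
    push_cast at h
    linarith
  -- mean computations
  have hmassG : ∀ i ∈ Finset.range (e+1), massHom (G i) = 1 := by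
    intro i _
    rw [hG]
    exact mass_AP _ _ (Nat.mul_pos (hcnpos i) hNpos)
  obtain ⟨hmassϑ, hmeanϑ⟩ := prod_mass_mean (Finset.range (e+1)) G hmassG
  have hmeanG : ∀ i ∈ Finset.range (e+1), meanHom (G i) = -(1/2 : ℝ) := by
    intro i _
    rw [hG]
    rw [mean_AP _ _ (Nat.mul_pos (hcnpos i) hNpos)]
    have hMcast : ((cn i * N : ℕ):ℝ) = ((c i:ℤ):ℝ) * (2*(H:ℝ)) := by
      rw [Nat.cast_mul, hNR]
      have h1 : ((cn i : ℕ):ℝ) = ((c i : ℤ):ℝ) := by exact_mod_cast hcnc i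
      rw [h1]
    rw [hMcast]
    push_cast
    ring
  have hmeanval : meanHom ϑ = -(((e:ℝ)+1)/2) := by
    rw [hϑ, hmeanϑ, Finset.sum_congr rfl hmeanG, Finset.sum_const,
      Finset.card_range, nsmul_eq_mul]
    push_cast
    ring
  -- conclusion
  refine ⟨fun i => -H * c (e - i), ϑ, ?_, ?_, ?_⟩
  · -- the form of ϑ
    have hunif : ∀ j, unifPMF (Finset.Ico (-H * c j) (-H * c j + 2*H*c j)) = G j := by
      intro j
      have hlen : 2*H*c j = ((cn j * N : ℕ) : ℤ) := by
        rw [Nat.cast_mul, hcnc j, hNZ]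
        ring
      rw [hlen, unif_eq, hG]
    have hstep1 : ∀ i ∈ Finset.range (e+1),
        unifPMF (Finset.Ico (-H * c (e - i)) (-H * c (e - i) + 2*H*a^i*b^(e+1-1-i)))
          = G (e - i) := by
      intro i hi
      rw [Finset.mem_range] at hi
      have h1 : 2*H*a^i*b^(e+1-1-i) = 2*H*c (e - i) := by
        have h2 : e+1-1-i = e - i := by omega
        rw [h2, hc]
        dsimp only
        have h3 : e - (e - i) = i := by omega
        rw [h3]
        ring
      rw [h1, hunif]
    rw [hϑ, Finset.prod_congr rfl hstep1]
    have hrefl := Finset.prod_range_reflect G (e+1)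
    simp only [Nat.add_sub_cancel] at hrefl
    exact hrefl.symm
  · -- total variation bound
    show nrm (pushPMF (e+1) H a b - ϑ) ≤ _
    refine le_trans hTV ?_
    rw [hK]
    have hident : ((e:ℝ)+1) * (((e:ℝ)+1)*((a:ℝ)+(b:ℝ))/(H:ℝ))
        = ((e:ℝ)+1)^2*((a:ℝ)+(b:ℝ))/(H:ℝ) := by ring
    rw [hident]
    have hx : (0:ℝ) ≤ ((e:ℝ)+1)^2*((a:ℝ)+(b:ℝ))/(H:ℝ) := by
      apply div_nonneg _ hHr.le
      nlinarith
    have hcast : (((e+1 : ℕ)):ℝ) = (e:ℝ)+1 := by push_cast; ring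
    rw [hcast]
    have h4 : 4 * ((e:ℝ)+1)^2 * ((a:ℝ)+(b:ℝ))/(H:ℝ)
        = 4 * (((e:ℝ)+1)^2 * ((a:ℝ)+(b:ℝ))/(H:ℝ)) := by ring
    rw [h4]
    linarith
  · -- mean bound
    show |∑ t ∈ ϑ.coeff.support, (t:ℝ) * ϑ.coeff t| ≤ _
    rw [← meanHom_apply, hmeanval, abs_neg, abs_of_nonneg (by positivity)]
    have hterm1 : ∀ i ∈ Finset.range (e+1), (1:ℝ) ≤ (a:ℝ)^i * (b:ℝ)^(e+1-1-i) := by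
      intro i _
      have h1 : (1:ℝ) ≤ (a:ℝ)^i := one_le_pow₀ har
      have h2 : (1:ℝ) ≤ (b:ℝ)^(e+1-1-i) := one_le_pow₀ (by linarith)
      nlinarith
    have hsum := Finset.card_nsmul_le_sum (Finset.range (e+1)) _ 1 hterm1
    rw [Finset.card_range, nsmul_eq_mul, mul_one] at hsum
    push_cast at hsum
    simp only [Nat.add_sub_cancel]
    linarith
end Stmt8

theorem stmt8 : ∃ C : ℝ, 0 < C ∧
    ∀ (d : ℕ), 1 ≤ d → ∀ (H : ℤ), 1 ≤ H → ∀ a b : ℤ,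
      Int.gcd a b = 1 → 1 ≤ a → a < b →
      ∃ (k : ℕ → ℤ) (ϑ : AddMonoidAlgebra ℝ ℤ),
        -- ϑ is the convolution over i = 0, …, d-1 of uniform pmfs on sets of
        -- 2H a^i b^(d-1-i) consecutive integers
        ϑ = ∏ i ∈ Finset.range d,
              unifPMF (Finset.Ico (k i) (k i + 2 * H * a ^ i * b ^ (d - 1 - i))) ∧
        (∑ t ∈ (pushPMF d H a b - ϑ).coeff.support, |(pushPMF d H a b - ϑ).coeff t|)
          ≤ C * (d : ℝ) ^ 2 * ((a : ℝ) + (b : ℝ)) / (H : ℝ) ∧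
        |∑ t ∈ ϑ.coeff.support, (t : ℝ) * ϑ.coeff t|
          ≤ ∑ i ∈ Finset.range d, (a : ℝ) ^ i * (b : ℝ) ^ (d - 1 - i) :=
  ⟨4, by norm_num, Stmt8.main_thm⟩
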